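/- For every m ≥ 0, the generating function of centrally symmetric permutations of odd degree satisfies Φ_HT(2m+1; z) := ∑_{s ∈ S^HT_{2m+1}} z^{inv(s)} = [∏_{i=1}^{m} (1 + z^{2i+1})] · Φ(m; z²), where Φ(m; w) = ∑_{s ∈ S_m} w^{inv(s)}. -/

import Mathlib

def inversions {n : ℕ} (s : Equiv.Perm (Fin n)) : ℕ :=
  (Finset.univ.filter fun p : Fin n × Fin n => p.1 < p.2 ∧ s p.2 < s p.1).card

def htPerms (n : ℕ) : Finset (Equiv.Perm (Fin n)) :=
  Finset.univ.filter fun s => ∀ i : Fin n, s i.rev = (s i).rev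

open Finset Equiv

lemma inversions_eq_sum {n : ℕ} (s : Equiv.Perm (Fin n)) :
    inversions s = ∑ a : Fin n, ∑ b : Fin n, if a < b ∧ s b < s a then 1 else 0 := by
  rw [inversions, Finset.card_filter, ← Finset.univ_product_univ, Finset.sum_product]

lemma card_filter_comp_perm {n : ℕ} (τ : Equiv.Perm (Fin n)) (P : Fin n → Prop)
    [DecidablePred P] :
    (Finset.univ.filter fun a => P (τ a)).card = (Finset.univ.filter P).card := by
  apply Finset.card_bij (fun a _ => τ a)
  · intro a ha; simp at ha ⊢; exact ha
  · intro a ha b hb hab; exact τ.injective hab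
  · intro b hb; exact ⟨τ.symm b, by simp at hb ⊢; exact hb, by simp⟩

lemma card_le_castSucc {m : ℕ} (p : Fin (m+1)) :
    (Finset.univ.filter fun v : Fin m => p ≤ v.castSucc).card = m - p.val := by
  rw [Finset.card_filter]
  simp only [Fin.le_def, Fin.coe_castSucc]
  rw [Fin.sum_univ_eq_sum_range (fun k => if (p:ℕ) ≤ k then (1:ℕ) else 0)]
  rw [← Finset.card_filter]
  rw [show (Finset.range m).filter (fun k => (p:ℕ) ≤ k) = Finset.Ico (p:ℕ) m by
    ext k; simp [Finset.mem_Ico, and_comm]]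
  exact Nat.card_Ico _ _

def insPerm {m : ℕ} (p : Fin (m+1)) (τ : Equiv.Perm (Fin m)) : Equiv.Perm (Fin (m+1)) :=
  finSuccEquivLast.trans ((Equiv.optionCongr τ).trans (finSuccEquiv' p).symm)

lemma insPerm_castSucc {m : ℕ} (p : Fin (m+1)) (τ : Equiv.Perm (Fin m)) (i : Fin m) :
    insPerm p τ i.castSucc = p.succAbove (τ i) := by
  simp [insPerm]

lemma insPerm_last {m : ℕ} (p : Fin (m+1)) (τ : Equiv.Perm (Fin m)) :
    insPerm p τ (Fin.last m) = p := by
  simp [insPerm]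

lemma inversions_insPerm {m : ℕ} (p : Fin (m+1)) (τ : Equiv.Perm (Fin m)) :
    inversions (insPerm p τ) = inversions τ + (m - p.val) := by
  rw [inversions_eq_sum, Fin.sum_univ_castSucc]
  have h1 : ∀ a : Fin m, (∑ b : Fin (m+1),
      if a.castSucc < b ∧ insPerm p τ b < insPerm p τ a.castSucc then 1 else 0) =
      (∑ b : Fin m, if a < b ∧ τ b < τ a then 1 else 0)
        + (if p ≤ (τ a).castSucc then 1 else 0) := by
    intro a
    rw [Fin.sum_univ_castSucc]
    congr 1
    · apply Finset.sum_congr rfl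
      intro b _
      rw [insPerm_castSucc, insPerm_castSucc]
      congr 1
      simp [Fin.castSucc_lt_castSucc_iff, Fin.succAbove_lt_succAbove_iff]
    · rw [insPerm_castSucc, insPerm_last]
      congr 1
      simp only [Fin.castSucc_lt_last a, true_and]
      rw [Fin.lt_succAbove_iff_le_castSucc]
  have h2 : (∑ b : Fin (m+1),
      if Fin.last m < b ∧ insPerm p τ b < insPerm p τ (Fin.last m) then 1 else 0) = 0 := by
    apply Finset.sum_eq_zero
    intro b _
    simp [Fin.not_lt.mpr (Fin.le_last b)]
  rw [h2, add_zero]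
  rw [Finset.sum_congr rfl (fun a _ => h1 a), Finset.sum_add_distrib]
  congr 1
  · rw [inversions_eq_sum]
  · rw [Finset.sum_boole]
    have := card_filter_comp_perm τ (fun v => p ≤ v.castSucc)
    simp only [Nat.cast_id] at this ⊢
    rw [this, card_le_castSucc]

lemma perm_rec {R : Type*} [CommRing R] (m : ℕ) (w : R) :
    (∑ σ : Equiv.Perm (Fin (m+1)), w ^ inversions σ)
      = (∑ j ∈ Finset.range (m+1), w ^ j) * ∑ τ : Equiv.Perm (Fin m), w ^ inversions τ := by
  have hbij : Function.Bijective
      (fun x : Equiv.Perm (Fin m) × Fin (m+1) => insPerm x.2 x.1) := by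
    rw [Fintype.bijective_iff_injective_and_card]
    constructor
    · rintro ⟨τ, p⟩ ⟨τ', p'⟩ h
      simp only at h
      have hp : p = p' := by
        have := congrArg (fun e : Equiv.Perm (Fin (m+1)) => e (Fin.last m)) h
        simpa [insPerm_last] using this
      subst hp
      have hτ : τ = τ' := by
        apply Equiv.ext
        intro i
        have := congrArg (fun e : Equiv.Perm (Fin (m+1)) => e i.castSucc) h
        simp only [insPerm_castSucc] at this
        exact Fin.succAbove_right_injective this
      simp [hτ]
    · simp [Fintype.card_perm, Fintype.card_prod, Nat.factorial_succ, Fintype.card_fin]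
      ring
  rw [← Fintype.sum_bijective _ hbij
    (fun x => w ^ (inversions x.1 + (m - x.2.val))) (fun σ => w ^ inversions σ)
    (fun x => by rw [inversions_insPerm])]
  rw [Fintype.sum_prod_type]
  simp only [pow_add]
  rw [← Finset.sum_mul_sum]
  rw [mul_comm]
  congr 1
  rw [Fin.sum_univ_eq_sum_range (fun k => w ^ (m - k))]
  rw [← Finset.sum_range_reflect (fun j => w ^ j) (m+1)]
  simp

section HT
variable {m : ℕ}

def EV (m : ℕ) : Fin (2*m+3) ≃ Option (Option (Fin (2*m+1))) :=
  (finSuccEquiv' (Fin.last (2*m+2))).trans (Equiv.optionCongr (finSuccEquiv' (0 : Fin (2*m+2))))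

def EP (q : Fin (2*m+3)) (r : Fin (2*m+2)) : Fin (2*m+3) ≃ Option (Option (Fin (2*m+1))) :=
  (finSuccEquiv' q).trans (Equiv.optionCongr (finSuccEquiv' r))

def VAL (v : Fin (2*m+1)) : Fin (2*m+3) := v.succ.castSucc

def htIns (q : Fin (2*m+3)) (r : Fin (2*m+2)) (s : Equiv.Perm (Fin (2*m+1))) :
    Equiv.Perm (Fin (2*m+3)) :=
  (EP q r).trans ((Equiv.optionCongr (Equiv.optionCongr s)).trans (EV m).symm)

def gg (q : Fin (2*m+3)) (r : Fin (2*m+2)) (i : Fin (2*m+1)) : Fin (2*m+3) :=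
  q.succAbove (r.succAbove i)

lemma EV_last : EV m (Fin.last (2*m+2)) = none := by
  simp [EV, finSuccEquiv'_at]

lemma EV_zero : EV m 0 = some none := by
  have h0 : (0 : Fin (2*m+3)) = Fin.castSucc (0 : Fin (2*m+2)) := by simp
  rw [EV, Equiv.trans_apply, h0, finSuccEquiv'_below (Fin.castSucc_lt_last _)]
  simp [finSuccEquiv'_at]

lemma EV_VAL (v : Fin (2*m+1)) : EV m (VAL v) = some (some v) := by
  rw [EV, Equiv.trans_apply, VAL,
    finSuccEquiv'_below (Fin.castSucc_lt_last _)]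
  simp only [Equiv.optionCongr_apply, Option.map_some]
  rw [finSuccEquiv'_above (by simp : (0 : Fin (2*m+2)) ≤ Fin.castSucc v)]

lemma EV_symm_none : (EV m).symm none = Fin.last (2*m+2) :=
  (Equiv.symm_apply_eq _).2 EV_last.symm

lemma EV_symm_some_none : (EV m).symm (some none) = 0 :=
  (Equiv.symm_apply_eq _).2 EV_zero.symm

lemma EV_symm_some_some (v : Fin (2*m+1)) : (EV m).symm (some (some v)) = VAL v :=
  (Equiv.symm_apply_eq _).2 (EV_VAL v).symm

lemma htIns_q (q : Fin (2*m+3)) (r : Fin (2*m+2)) (s : Equiv.Perm (Fin (2*m+1))) :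
    htIns q r s q = Fin.last (2*m+2) := by
  simp [htIns, EP, finSuccEquiv'_at, EV_symm_none]

lemma htIns_qrev {q : Fin (2*m+3)} {r : Fin (2*m+2)} (hr : q.succAbove r = q.rev)
    (s : Equiv.Perm (Fin (2*m+1))) : htIns q r s q.rev = 0 := by
  rw [← hr]
  simp [htIns, EP, finSuccEquiv'_succAbove, finSuccEquiv'_at, EV_symm_some_none]

lemma htIns_gg (q : Fin (2*m+3)) (r : Fin (2*m+2)) (s : Equiv.Perm (Fin (2*m+1)))
    (i : Fin (2*m+1)) : htIns q r s (gg q r i) = VAL (s i) := by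
  simp [htIns, EP, gg, finSuccEquiv'_succAbove, EV_symm_some_some]

lemma gg_ne_q (q : Fin (2*m+3)) (r : Fin (2*m+2)) (i : Fin (2*m+1)) : gg q r i ≠ q :=
  Fin.succAbove_ne q _

lemma gg_ne_qrev {q : Fin (2*m+3)} {r : Fin (2*m+2)} (hr : q.succAbove r = q.rev)
    (i : Fin (2*m+1)) : gg q r i ≠ q.rev := by
  rw [← hr, gg]
  intro h
  exact Fin.succAbove_ne r i (Fin.succAbove_right_injective h)

lemma gg_strictMono (q : Fin (2*m+3)) (r : Fin (2*m+2)) : StrictMono (gg q r) :=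
  (Fin.strictMono_succAbove q).comp (Fin.strictMono_succAbove r)

lemma exists_gg {q : Fin (2*m+3)} {r : Fin (2*m+2)} (hr : q.succAbove r = q.rev)
    {x : Fin (2*m+3)} (hx : x ≠ q) (hx' : x ≠ q.rev) : ∃ i, gg q r i = x := by
  obtain ⟨a, ha⟩ := Fin.exists_succAbove_eq hx
  have har : a ≠ r := by rintro rfl; exact hx' (ha ▸ hr ▸ rfl)
  obtain ⟨i, hi⟩ := Fin.exists_succAbove_eq har
  exact ⟨i, by rw [gg, hi, ha]⟩

lemma range_gg {q : Fin (2*m+3)} {r : Fin (2*m+2)} (hr : q.succAbove r = q.rev) :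
    Set.range (gg q r) = {x | x ≠ q ∧ x ≠ q.rev} := by
  ext x
  constructor
  · rintro ⟨i, rfl⟩; exact ⟨gg_ne_q q r i, gg_ne_qrev hr i⟩
  · rintro ⟨h1, h2⟩; exact exists_gg hr h1 h2

lemma gg_rev {q : Fin (2*m+3)} {r : Fin (2*m+2)} (hr : q.succAbove r = q.rev)
    (i : Fin (2*m+1)) : (gg q r i).rev = gg q r i.rev := by
  have hsm2 : StrictMono (fun i : Fin (2*m+1) => (gg q r i.rev).rev) := by
    intro i j hij
    exact Fin.rev_lt_rev.2 (gg_strictMono q r (Fin.rev_lt_rev.2 (by simpa using hij)))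
  have hrange : Set.range (fun i : Fin (2*m+1) => (gg q r i.rev).rev) = Set.range (gg q r) := by
    rw [range_gg hr]
    ext x
    constructor
    · rintro ⟨i, rfl⟩
      refine ⟨fun h => ?_, fun h => ?_⟩
      · have := congrArg Fin.rev h
        rw [Fin.rev_rev] at this
        exact gg_ne_qrev hr i.rev this
      · have := congrArg Fin.rev h
        rw [Fin.rev_rev, Fin.rev_rev] at this
        exact gg_ne_q q r i.rev this
    · rintro ⟨h1, h2⟩
      obtain ⟨i, hi⟩ := exists_gg hr (q := q) (x := x.rev)
        (fun h => h2 (by rw [← Fin.rev_rev x, h]))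
        (fun h => h1 (by rw [← Fin.rev_rev x, h, Fin.rev_rev]))
      exact ⟨i.rev, by simp [Fin.rev_rev, hi]⟩
  have inst : WellFoundedLT (Fin (2*m+1)) := inferInstance
  have := (@StrictMono.range_inj (Fin (2*m+1)) (Fin (2*m+3)) _ _ inst _ _
    hsm2 (gg_strictMono q r)).1 hrange
  have h2 := congrFun this i.rev
  simp only [Fin.rev_rev] at h2
  exact h2

lemma VAL_rev (v : Fin (2*m+1)) : (VAL v).rev = VAL v.rev := by
  apply Fin.ext
  rw [Fin.val_rev]
  simp only [VAL, Fin.coe_castSucc, Fin.val_succ, Fin.val_rev]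
  omega

lemma VAL_strictMono : StrictMono (VAL (m := m)) := by
  intro i j h
  rw [VAL, VAL, Fin.castSucc_lt_castSucc_iff, Fin.succ_lt_succ_iff]
  exact h

lemma VAL_injective : Function.Injective (VAL (m := m)) := VAL_strictMono.injective

lemma VAL_pos (v : Fin (2*m+1)) : 0 < VAL v := by
  simp [VAL, Fin.lt_def]

lemma VAL_lt_last (v : Fin (2*m+1)) : VAL v < Fin.last (2*m+2) :=
  Fin.castSucc_lt_last _

lemma mem_htPerms {n : ℕ} {s : Equiv.Perm (Fin n)} :
    s ∈ htPerms n ↔ ∀ i : Fin n, s i.rev = (s i).rev := by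
  simp [htPerms]

lemma htIns_mem {q : Fin (2*m+3)} {r : Fin (2*m+2)} (hr : q.succAbove r = q.rev)
    {s : Equiv.Perm (Fin (2*m+1))} (hs : s ∈ htPerms (2*m+1)) :
    htIns q r s ∈ htPerms (2*m+3) := by
  rw [mem_htPerms] at hs ⊢
  intro x
  by_cases hx : x = q
  · subst hx
    rw [htIns_qrev hr, htIns_q, Fin.rev_last]
  by_cases hx' : x = q.rev
  · subst hx'
    rw [Fin.rev_rev, htIns_q, htIns_qrev hr, Fin.rev_zero]
  obtain ⟨i, rfl⟩ := exists_gg hr hx hx'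
  rw [gg_rev hr, htIns_gg, htIns_gg, hs i, VAL_rev]

lemma image_gg {q : Fin (2*m+3)} {r : Fin (2*m+2)} (hr : q.succAbove r = q.rev)
    (hq : q ≠ q.rev) :
    Finset.univ.image (gg q r) = (Finset.univ.erase q).erase q.rev := by
  apply Finset.eq_of_subset_of_card_le
  · intro x hx
    obtain ⟨i, _, rfl⟩ := Finset.mem_image.1 hx
    exact Finset.mem_erase.2 ⟨gg_ne_qrev hr i,
      Finset.mem_erase.2 ⟨gg_ne_q q r i, Finset.mem_univ _⟩⟩
  · rw [Finset.card_erase_of_mem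
      (Finset.mem_erase.2 ⟨fun h => hq h.symm, Finset.mem_univ _⟩),
      Finset.card_erase_of_mem (Finset.mem_univ _),
      Finset.card_image_of_injective _ (gg_strictMono q r).injective]
    simp

lemma card_filter_gg {q : Fin (2*m+3)} {r : Fin (2*m+2)} (hr : q.succAbove r = q.rev)
    (hq : q ≠ q.rev) (P : Fin (2*m+3) → Prop) [DecidablePred P] :
    (Finset.univ.filter fun i => P (gg q r i)).card
      = (((Finset.univ.filter P).erase q).erase q.rev).card := by
  rw [← Finset.card_image_of_injective _ (gg_strictMono q r).injective,
    ← Finset.filter_image, image_gg hr hq, Finset.filter_erase, Finset.filter_erase]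

lemma card_filter_lt_fin {N : ℕ} (c : Fin N) :
    (Finset.univ.filter fun x : Fin N => c < x).card = N - 1 - c.val := by
  rw [← Fin.card_Ioi c]
  congr 1
  ext x
  simp [Finset.mem_Ioi]

lemma card_filter_gt_fin {N : ℕ} (c : Fin N) :
    (Finset.univ.filter fun x : Fin N => x < c).card = c.val := by
  rw [← Fin.card_Iio c]
  congr 1
  ext x
  simp [Finset.mem_Iio]

lemma sum_peel_two {M : Type*} [AddCommMonoid M] {N : ℕ} (f : Fin N → M) {q q' : Fin N}
    (h : q ≠ q') :
    ∑ x, f x = f q + f q' + ∑ x ∈ (Finset.univ.erase q).erase q', f x := by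
  rw [← Finset.add_sum_erase _ f (Finset.mem_univ q),
    ← Finset.add_sum_erase _ f (Finset.mem_erase.2 ⟨h.symm, Finset.mem_univ q'⟩), add_assoc]

lemma sum_rest_eq {M : Type*} [AddCommMonoid M] {q : Fin (2*m+3)} {r : Fin (2*m+2)}
    (hr : q.succAbove r = q.rev) (hq : q ≠ q.rev) (F : Fin (2*m+3) → M) :
    ∑ x ∈ (Finset.univ.erase q).erase q.rev, F x = ∑ i, F (gg q r i) := by
  rw [← image_gg hr hq,
    Finset.sum_image (fun x _ y _ h => (gg_strictMono q r).injective h)]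

def dd (m : ℕ) (q : Fin (2*m+3)) : ℕ :=
  if (q:ℕ) < m+1 then 2*(m - (q:ℕ)) + (2*m+3) else 2*(2*m+2 - (q:ℕ))

lemma inversions_htIns {q : Fin (2*m+3)} {r : Fin (2*m+2)} (hr : q.succAbove r = q.rev)
    (hq : q ≠ q.rev) (s : Equiv.Perm (Fin (2*m+1))) :
    inversions (htIns q r s) = inversions s + dd m q := by
  have hql : (q:ℕ) ≤ 2*m+2 := by omega
  have hrev : (q.rev : ℕ) = 2*m+2 - (q:ℕ) := by rw [Fin.val_rev]; omega
  have hqc : (q:ℕ) ≠ m+1 := fun h => hq (Fin.ext (by rw [hrev]; omega))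
  have hltv : q < q.rev ↔ (q:ℕ) < m+1 := by
    rw [Fin.lt_def, hrev]; omega
  rw [inversions_eq_sum,
    sum_peel_two (fun a => ∑ b, if a < b ∧ htIns q r s b < htIns q r s a then (1:ℕ) else 0) hq,
    sum_rest_eq hr hq]
  have hS1 : (∑ b, if q < b ∧ htIns q r s b < htIns q r s q then (1:ℕ) else 0)
      = (if q < q.rev then 1 else 0) + (2*m+2 - (q:ℕ) - (if q < q.rev then 1 else 0)) := by
    rw [sum_peel_two _ hq, sum_rest_eq hr hq]
    have e1 : (if q < q ∧ htIns q r s q < htIns q r s q then (1:ℕ) else 0) = 0 := by simp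
    have e2 : (if q < q.rev ∧ htIns q r s q.rev < htIns q r s q then (1:ℕ) else 0)
        = if q < q.rev then 1 else 0 := by
      rw [htIns_qrev hr, htIns_q]
      simp [Fin.last_pos']
    have e3 : (∑ i, if q < gg q r i ∧ htIns q r s (gg q r i) < htIns q r s q then (1:ℕ) else 0)
        = 2*m+2 - (q:ℕ) - (if q < q.rev then 1 else 0) := by
      have : ∀ i, (if q < gg q r i ∧ htIns q r s (gg q r i) < htIns q r s q then (1:ℕ) else 0)
          = if q < gg q r i then 1 else 0 := by
        intro i
        rw [htIns_gg, htIns_q]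
        simp [VAL_lt_last]
      rw [Finset.sum_congr rfl (fun i _ => this i), Finset.sum_boole, Nat.cast_id,
        card_filter_gg hr hq (fun x => q < x)]
      by_cases hlt : q < q.rev
      · rw [Finset.card_erase_of_mem (Finset.mem_erase.2 ⟨Ne.symm hq, by simp [hlt]⟩),
          Finset.erase_eq_of_notMem (by simp), card_filter_lt_fin, if_pos hlt]
        omega
      · rw [Finset.erase_eq_of_notMem (by simp [hlt]), Finset.erase_eq_of_notMem (by simp),
          card_filter_lt_fin, if_neg hlt]
        omega
    rw [e1, e2, e3, zero_add]
  have hS2 : (∑ b, if q.rev < b ∧ htIns q r s b < htIns q r s q.rev then (1:ℕ) else 0) = 0 := by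
    apply Finset.sum_eq_zero
    intro b _
    rw [htIns_qrev hr]
    simp [Fin.not_lt.2 (Fin.zero_le _)]
  have hS3 : (∑ i, ∑ b, if gg q r i < b ∧ htIns q r s b < htIns q r s (gg q r i) then (1:ℕ) else 0)
      = ((q.rev:ℕ) - (if q < q.rev then 1 else 0)) + inversions s := by
    have hin : ∀ i, (∑ b, if gg q r i < b ∧ htIns q r s b < htIns q r s (gg q r i) then (1:ℕ) else 0)
        = (if gg q r i < q.rev then 1 else 0)
          + ∑ j, if i < j ∧ s j < s i then (1:ℕ) else 0 := by
      intro i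
      rw [sum_peel_two _ hq, sum_rest_eq hr hq]
      have e1 : (if gg q r i < q ∧ htIns q r s q < htIns q r s (gg q r i) then (1:ℕ) else 0)
          = 0 := by
        rw [htIns_q, htIns_gg]
        simp [Fin.not_lt.2 (Fin.le_last _)]
      have e2 : (if gg q r i < q.rev ∧ htIns q r s q.rev < htIns q r s (gg q r i) then (1:ℕ) else 0)
          = if gg q r i < q.rev then 1 else 0 := by
        rw [htIns_qrev hr, htIns_gg]
        simp [VAL_pos]
      have e3 : ∀ j, (if gg q r i < gg q r j ∧ htIns q r s (gg q r j) < htIns q r s (gg q r i) then (1:ℕ) else 0)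
          = if i < j ∧ s j < s i then 1 else 0 := by
        intro j
        rw [htIns_gg, htIns_gg]
        congr 1
        simp [(gg_strictMono q r).lt_iff_lt, VAL_strictMono.lt_iff_lt]
      rw [e1, e2, Finset.sum_congr rfl (fun j _ => e3 j), zero_add]
    rw [Finset.sum_congr rfl (fun i _ => hin i), Finset.sum_add_distrib]
    congr 1
    · rw [Finset.sum_boole, Nat.cast_id, card_filter_gg hr hq (fun x => x < q.rev),
        Finset.erase_eq_of_notMem (by simp)]
      by_cases hlt : q < q.rev
      · rw [Finset.card_erase_of_mem (by simp [hlt]), card_filter_gt_fin, if_pos hlt]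
      · rw [Finset.erase_eq_of_notMem (by simp [hlt]), card_filter_gt_fin, if_neg hlt]
        omega
    · rw [inversions_eq_sum]
  rw [hS1, hS2, hS3, dd]
  by_cases hlt : q < q.rev
  · rw [if_pos hlt, if_pos (hltv.1 hlt)]
    have := hltv.1 hlt
    omega
  · rw [if_neg hlt, if_neg (fun h => hlt (hltv.2 h))]
    have := fun h => hlt (hltv.2 h)
    omega

lemma EP_symm_none (q : Fin (2*m+3)) (r : Fin (2*m+2)) : (EP q r).symm none = q := by
  simp [EP, finSuccEquiv'_symm_none, ← Equiv.optionCongr_symm, Equiv.optionCongr_apply]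

lemma EP_symm_some_none {q : Fin (2*m+3)} {r : Fin (2*m+2)} (hr : q.succAbove r = q.rev) :
    (EP q r).symm (some none) = q.rev := by
  simp [EP, finSuccEquiv'_symm_none, hr, ← Equiv.optionCongr_symm, Equiv.optionCongr_apply]

lemma EP_symm_some_some (q : Fin (2*m+3)) (r : Fin (2*m+2)) (i : Fin (2*m+1)) :
    (EP q r).symm (some (some i)) = gg q r i := by
  simp [EP, gg, ← Equiv.optionCongr_symm, Equiv.optionCongr_apply]

def extract (t : Equiv.Perm (Fin (2*m+3))) (q : Fin (2*m+3)) (r : Fin (2*m+2)) :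
    Equiv.Perm (Fin (2*m+1)) :=
  Equiv.removeNone (Equiv.removeNone ((EP q r).symm.trans (t.trans (EV m))))

lemma extract_spec (t : Equiv.Perm (Fin (2*m+3))) {q : Fin (2*m+3)} {r : Fin (2*m+2)}
    (hr : q.succAbove r = q.rev) (htq : t q = Fin.last (2*m+2)) (htrev : t q.rev = 0)
    (i : Fin (2*m+1)) :
    t (gg q r i) = VAL (extract t q r i) := by
  set u := (EP q r).symm.trans (t.trans (EV m)) with hu
  have hnone : u none = none := by
    rw [hu, Equiv.trans_apply, Equiv.trans_apply, EP_symm_none, htq, EV_last]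
  have hsn : u (some none) = some none := by
    rw [hu, Equiv.trans_apply, Equiv.trans_apply, EP_symm_some_none hr, htrev, EV_zero]
  have hex : ∀ x, ∃ y, u (some x) = some y := by
    intro x
    rcases h : u (some x) with _ | y
    · exact absurd (u.injective (h.trans hnone.symm)) (by simp)
    · exact ⟨y, rfl⟩
  have h1 : ∀ x, some (Equiv.removeNone u x) = u (some x) :=
    fun x => Equiv.removeNone_some _ (hex x)
  have h1n : Equiv.removeNone u none = none := by
    have := h1 none
    rw [hsn] at this
    exact Option.some_injective _ this
  have hex2 : ∀ x : Fin (2*m+1), ∃ y, Equiv.removeNone u (some x) = some y := by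
    intro x
    rcases h : Equiv.removeNone u (some x) with _ | y
    · exact absurd ((Equiv.removeNone u).injective (h.trans h1n.symm)) (by simp)
    · exact ⟨y, rfl⟩
  have h2 : ∀ x, some (Equiv.removeNone (Equiv.removeNone u) x) = Equiv.removeNone u (some x) :=
    fun x => Equiv.removeNone_some _ (hex2 x)
  have hchain : u (some (some i)) = some (some (extract t q r i)) := by
    rw [extract, ← h1, ← h2]
  have hu2 : u (some (some i)) = EV m (t (gg q r i)) := by
    rw [hu, Equiv.trans_apply, Equiv.trans_apply, EP_symm_some_some]
  rw [hu2] at hchain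
  have := congrArg (EV m).symm hchain
  rw [Equiv.symm_apply_apply, EV_symm_some_some] at this
  exact this

noncomputable def rr (m : ℕ) (q : Fin (2*m+3)) : Fin (2*m+2) :=
  if h : q.rev = q then 0 else (Fin.exists_succAbove_eq h).choose

lemma rr_spec {q : Fin (2*m+3)} (hq : q ≠ q.rev) : q.succAbove (rr m q) = q.rev := by
  have hne : q.rev ≠ q := fun h => hq h.symm
  rw [rr, dif_neg hne]
  exact (Fin.exists_succAbove_eq hne).choose_spec

lemma symm_last_ne_rev {t : Equiv.Perm (Fin (2*m+3))} (ht : t ∈ htPerms (2*m+3)) :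
    t.symm (Fin.last (2*m+2)) ≠ (t.symm (Fin.last (2*m+2))).rev := by
  set q := t.symm (Fin.last (2*m+2)) with hqdef
  have htq : t q = Fin.last (2*m+2) := t.apply_symm_apply _
  intro h
  have h2 := (mem_htPerms.1 ht) q
  rw [← h, htq, Fin.rev_last] at h2
  exact absurd h2 (by simp [Fin.ext_iff])

lemma t_symm_last_apply {t : Equiv.Perm (Fin (2*m+3))} :
    t (t.symm (Fin.last (2*m+2))) = Fin.last (2*m+2) := t.apply_symm_apply _

lemma t_rev_apply {t : Equiv.Perm (Fin (2*m+3))} (ht : t ∈ htPerms (2*m+3)) :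
    t ((t.symm (Fin.last (2*m+2))).rev) = 0 := by
  rw [(mem_htPerms.1 ht) _, t_symm_last_apply, Fin.rev_last]

lemma htIns_extract {t : Equiv.Perm (Fin (2*m+3))} (ht : t ∈ htPerms (2*m+3)) :
    htIns (t.symm (Fin.last (2*m+2))) (rr m (t.symm (Fin.last (2*m+2))))
      (extract t (t.symm (Fin.last (2*m+2))) (rr m (t.symm (Fin.last (2*m+2))))) = t := by
  set q := t.symm (Fin.last (2*m+2)) with hqdef
  have hq : q ≠ q.rev := symm_last_ne_rev ht
  have hr := rr_spec hq
  have htq : t q = Fin.last (2*m+2) := t.apply_symm_apply _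
  have htrev : t q.rev = 0 := t_rev_apply ht
  apply Equiv.ext
  intro x
  by_cases hx : x = q
  · rw [hx, htIns_q, htq]
  by_cases hx' : x = q.rev
  · rw [hx', htIns_qrev hr, htrev]
  obtain ⟨i, rfl⟩ := exists_gg hr hx hx'
  rw [htIns_gg, ← extract_spec t hr htq htrev]

lemma extract_mem {t : Equiv.Perm (Fin (2*m+3))} (ht : t ∈ htPerms (2*m+3)) :
    extract t (t.symm (Fin.last (2*m+2))) (rr m (t.symm (Fin.last (2*m+2))))
      ∈ htPerms (2*m+1) := by
  set q := t.symm (Fin.last (2*m+2)) with hqdef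
  have hq : q ≠ q.rev := symm_last_ne_rev ht
  have hr := rr_spec hq
  have htq : t q = Fin.last (2*m+2) := t.apply_symm_apply _
  have htrev : t q.rev = 0 := t_rev_apply ht
  rw [mem_htPerms]
  intro i
  apply VAL_injective
  rw [← VAL_rev, ← extract_spec t hr htq htrev, ← extract_spec t hr htq htrev,
    ← gg_rev hr]
  exact (mem_htPerms.1 ht) _

lemma ht_rec {R : Type*} [CommRing R] (m : ℕ) (z : R) :
    (∑ t ∈ htPerms (2*m+3), z ^ inversions t)
      = (∑ q ∈ Finset.univ.filter (fun q : Fin (2*m+3) => q ≠ q.rev), z ^ dd m q)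
        * ∑ s ∈ htPerms (2*m+1), z ^ inversions s := by
  rw [Finset.sum_mul_sum]
  rw [← Finset.sum_product']
  apply Finset.sum_nbij'
    (i := fun t : Equiv.Perm (Fin (2*m+3)) =>
      (t.symm (Fin.last (2*m+2)), extract t (t.symm (Fin.last (2*m+2)))
        (rr m (t.symm (Fin.last (2*m+2))))))
    (j := fun x => htIns x.1 (rr m x.1) x.2)
  · intro t ht
    exact Finset.mem_product.2
      ⟨Finset.mem_filter.2 ⟨Finset.mem_univ _, symm_last_ne_rev ht⟩, extract_mem ht⟩
  · intro x hx
    obtain ⟨hx1, hx2⟩ := Finset.mem_product.1 hx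
    exact htIns_mem (rr_spec (Finset.mem_filter.1 hx1).2) hx2
  · intro t ht
    exact htIns_extract ht
  · intro x hx
    obtain ⟨hx1, hx2⟩ := Finset.mem_product.1 hx
    have hq : x.1 ≠ x.1.rev := (Finset.mem_filter.1 hx1).2
    have hr := rr_spec hq
    have hq' : (htIns x.1 (rr m x.1) x.2).symm (Fin.last (2*m+2)) = x.1 := by
      rw [Equiv.symm_apply_eq, htIns_q]
    rw [hq']
    refine Prod.ext rfl ?_
    dsimp only
    apply Equiv.ext
    intro i
    apply VAL_injective
    rw [← extract_spec (htIns x.1 (rr m x.1) x.2) hr (htIns_q _ _ _) (htIns_qrev hr _),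
      htIns_gg]
  · intro t ht
    have hq : t.symm (Fin.last (2*m+2)) ≠ (t.symm (Fin.last (2*m+2))).rev :=
      symm_last_ne_rev ht
    dsimp only
    rw [← pow_add]
    congr 1
    conv_lhs => rw [← htIns_extract ht]
    rw [inversions_htIns (rr_spec hq) hq, add_comm]

end HT

lemma dd_sum {R : Type*} [CommRing R] (m : ℕ) (z : R) :
    (∑ q ∈ Finset.univ.filter (fun q : Fin (2*m+3) => q ≠ q.rev), z ^ dd m q)
      = (1 + z^(2*m+3)) * ∑ j ∈ Finset.range (m+1), z^(2*j) := by
  set c : Fin (2*m+3) := ⟨m+1, by omega⟩ with hc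
  have hfilter : Finset.univ.filter (fun q : Fin (2*m+3) => q ≠ q.rev)
      = Finset.univ.erase c := by
    ext q
    simp only [Finset.mem_filter, Finset.mem_erase, Finset.mem_univ, true_and, and_true]
    apply not_congr
    have hcv : (c : ℕ) = m+1 := rfl
    rw [Fin.ext_iff, Fin.ext_iff, Fin.val_rev, hcv]
    have := q.isLt
    constructor <;> intro <;> omega
  have h1 : (∑ k ∈ Finset.range (m+1),
      z ^ (if k < m+1 then 2*(m-k)+(2*m+3) else 2*(2*m+2-k)))
      = z^(2*m+3) * ∑ j ∈ Finset.range (m+1), z^(2*j) := by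
    rw [Finset.mul_sum]
    rw [← Finset.sum_range_reflect (fun j => z^(2*m+3) * z^(2*j)) (m+1)]
    apply Finset.sum_congr rfl
    intro k hk
    have hk' := Finset.mem_range.1 hk
    rw [if_pos hk', ← pow_add]
    congr 1
    omega
  have h2 : (∑ k ∈ Finset.range (m+2),
      z ^ (if (m+1)+k < m+1 then 2*(m-((m+1)+k))+(2*m+3) else 2*(2*m+2-((m+1)+k))))
      = (∑ j ∈ Finset.range (m+1), z^(2*j)) + z^(2*(m+1)) := by
    rw [← Finset.sum_range_succ (fun j => z^(2*j)) (m+1)]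
    rw [← Finset.sum_range_reflect (fun j => z^(2*j)) (m+2)]
    apply Finset.sum_congr rfl
    intro k hk
    have hk' := Finset.mem_range.1 hk
    rw [if_neg (by omega)]
    congr 1
    omega
  have huniv : (∑ q : Fin (2*m+3), z ^ dd m q)
      = ((1 + z^(2*m+3)) * ∑ j ∈ Finset.range (m+1), z^(2*j)) + z ^ (2*(m+1)) := by
    simp only [dd]
    rw [Fin.sum_univ_eq_sum_range
      (fun k => z ^ (if k < m+1 then 2*(m-k)+(2*m+3) else 2*(2*m+2-k)))]
    have hr23 : Finset.range (2*m+3) = Finset.range ((m+1)+(m+2)) := by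
      rw [show (m+1)+(m+2) = 2*m+3 by ring]
    rw [hr23, Finset.sum_range_add, h1, h2]
    ring
  have hddc : dd m c = 2*(m+1) := by
    have hcv : (c : ℕ) = m+1 := rfl
    rw [dd, hcv, if_neg (by omega)]
    omega
  have hsplit := Finset.add_sum_erase Finset.univ (fun q => z ^ dd m q) (Finset.mem_univ c)
  rw [hfilter]
  have : (∑ q ∈ Finset.univ.erase c, z ^ dd m q)
      = (∑ q : Fin (2*m+3), z ^ dd m q) - z ^ dd m c := by
    rw [← hsplit]; ring
  rw [this, huniv, hddc]
  ring

theorem stmt6 {R : Type*} [CommRing R] (m : ℕ) (z : R) :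
    (∑ s ∈ htPerms (2 * m + 1), z ^ inversions s) =
      (∏ i ∈ Finset.range m, (1 + z ^ (2 * i + 3))) *
        ∑ s : Equiv.Perm (Fin m), (z ^ 2) ^ inversions s := by
  induction m with
  | zero =>
      have h1 : htPerms (2*0+1) = Finset.univ := by
        ext s
        simp only [htPerms, Finset.mem_filter, Finset.mem_univ, true_and, iff_true]
        intro i
        apply Fin.ext
        have h1 := (s i.rev).isLt
        have h2 := ((s i).rev).isLt
        omega
      have h2 : ∀ s : Equiv.Perm (Fin (2*0+1)), inversions s = 0 := by
        intro s
        rw [inversions, Finset.card_eq_zero, Finset.filter_eq_empty_iff]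
        rintro p - ⟨hlt, -⟩
        have h1 := p.1.isLt
        have h2 := p.2.isLt
        rw [Fin.lt_def] at hlt
        omega
      have h3 : ∀ s : Equiv.Perm (Fin 0), inversions s = 0 := by
        intro s
        rw [inversions, Finset.card_eq_zero, Finset.filter_eq_empty_iff]
        rintro p - ⟨hlt, -⟩
        exact absurd p.1.isLt (by omega)
      rw [h1]
      simp only [h2, h3, pow_zero]
      simp [Fintype.card_perm]
  | succ k ih =>
      have e1 : (∑ s ∈ htPerms (2 * (k+1) + 1), z ^ inversions s)
          = (∑ q ∈ Finset.univ.filter (fun q : Fin (2*k+3) => q ≠ q.rev), z ^ dd k q)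
            * ∑ s ∈ htPerms (2*k+1), z ^ inversions s := ht_rec k z
      rw [e1, dd_sum, ih]
      rw [Finset.prod_range_succ]
      rw [perm_rec k (z^2)]
      have e4 : (∑ j ∈ Finset.range (k+1), z^(2*j))
          = ∑ j ∈ Finset.range (k+1), (z^2)^j :=
        Finset.sum_congr rfl (fun j _ => by rw [pow_mul])
      rw [e4]
      ring
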